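/- Let {T(v)} be a tree representation of a finite simple graph G, and let v be a vertex maximizing the depth d(𝐯) of the root of its subtree. If u₁ and u₂ are vertices in N[v] and T(u₂) overshadows T(u₁), then N[u₁] ⊆ N[u₂]. -/

import Mathlib

/-- A host tree: a finite tree (connected acyclic simple graph on a nonempty
finite node set) with a distinguished root and positive real edge weights. -/
structure HostTree where
  V : Type
  [fintypeV : Fintype V]
  [nonemptyV : Nonempty V]
  G : SimpleGraph V
  isTree : G.IsTree
  root : V
  w : V → V → ℝ
  w_symm : ∀ x y : V, w x y = w y x
  w_pos : ∀ x y : V, G.Adj x y → 0 < w x y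

attribute [instance] HostTree.fintypeV HostTree.nonemptyV

/-- The unique path in the host tree from the root to a node. -/
noncomputable def HostTree.rootPath (T : HostTree) (x : T.V) : T.G.Walk T.root x :=
  (T.isTree.existsUnique_path T.root x).choose

/-- The depth of a node: the sum of the weights of the edges on the unique
path from the root to the node. -/
noncomputable def HostTree.depth (T : HostTree) (x : T.V) : ℝ :=
  ((T.rootPath x).darts.map (fun d => T.w d.toProd.1 d.toProd.2)).sum

/-- A subtree of the host tree: a nonempty set of nodes inducing a connected
subgraph. -/
def HostTree.IsSubtree (T : HostTree) (S : Set T.V) : Prop :=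
  S.Nonempty ∧ (T.G.induce S).Connected

/-- `S₁` overshadows `S₂`: every node of `S₂ \ S₁` has strictly greater depth
than every node of `S₂ ∩ S₁`. -/
def HostTree.Overshadows (T : HostTree) (S₁ S₂ : Set T.V) : Prop :=
  ∀ x ∈ S₂ \ S₁, ∀ y ∈ S₂ ∩ S₁, T.depth y < T.depth x

/-- Two subtrees are compatible if one overshadows the other. -/
def HostTree.CompatiblePair (T : HostTree) (S₁ S₂ : Set T.V) : Prop :=
  T.Overshadows S₁ S₂ ∨ T.Overshadows S₂ S₁

/-- `x` is the root of the subtree `S`: a node of `S` of minimum depth. -/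
def HostTree.IsSubtreeRoot (T : HostTree) (S : Set T.V) (x : T.V) : Prop :=
  x ∈ S ∧ ∀ y ∈ S, T.depth x ≤ T.depth y

/-- The closed neighbourhood `N[v]` of a vertex. -/
def closedNbhd {α : Type*} (G : SimpleGraph α) (v : α) : Set α :=
  insert v (G.neighborSet v)

/-- A tree representation of `G`: a subtree `t v` of the host tree for every
vertex `v`, such that distinct vertices are adjacent iff their subtrees meet. -/
def IsTreeRep {α : Type*} (G : SimpleGraph α) (T : HostTree) (t : α → Set T.V) : Prop :=
  (∀ v : α, T.IsSubtree (t v)) ∧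
  ∀ u v : α, u ≠ v → (G.Adj u v ↔ (t u ∩ t v).Nonempty)

/-- A compatible tree representation: a tree representation all of whose
subtrees are pairwise compatible. -/
def IsCompatibleTreeRep {α : Type*} (G : SimpleGraph α) (T : HostTree)
    (t : α → Set T.V) : Prop :=
  IsTreeRep G T t ∧ ∀ u v : α, T.CompatiblePair (t u) (t v)

/-- A strong elimination order. -/
def IsStrongElimOrder {α : Type*} (G : SimpleGraph α) {n : ℕ} (σ : Fin n ≃ α) : Prop :=
  ∀ i j k l : Fin n, i < j → k < l →
    σ k ∈ closedNbhd G (σ i) → σ l ∈ closedNbhd G (σ i) →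
    σ k ∈ closedNbhd G (σ j) → σ l ∈ closedNbhd G (σ j)

namespace HostTree

open SimpleGraph

noncomputable instance (T : HostTree) : DecidableEq T.V := Classical.decEq _

variable (T : HostTree)

lemma rootPath_isPath (x : T.V) : (T.rootPath x).IsPath :=
  (T.isTree.existsUnique_path T.root x).choose_spec.1

lemma path_unique {a b : T.V} {p q : T.G.Walk a b} (hp : p.IsPath) (hq : q.IsPath) : p = q := by
  obtain ⟨r, -, hr⟩ := T.isTree.existsUnique_path a b
  rw [hr p hp, hr q hq]

lemma eq_rootPath {x : T.V} {p : T.G.Walk T.root x} (hp : p.IsPath) : p = T.rootPath x :=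
  T.path_unique hp (T.rootPath_isPath x)

/-- The sum of the weights of the edges of a walk. -/
noncomputable def wsum {a b : T.V} (p : T.G.Walk a b) : ℝ :=
  (p.darts.map (fun d => T.w d.toProd.1 d.toProd.2)).sum

lemma depth_eq_wsum (x : T.V) : T.depth x = T.wsum (T.rootPath x) := rfl

lemma wsum_append {a b c : T.V} (p : T.G.Walk a b) (q : T.G.Walk b c) :
    T.wsum (p.append q) = T.wsum p + T.wsum q := by
  simp [wsum, SimpleGraph.Walk.darts_append]

lemma wsum_nonneg {a b : T.V} (p : T.G.Walk a b) : 0 ≤ T.wsum p := by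
  apply List.sum_nonneg
  rintro x hx
  rw [List.mem_map] at hx
  obtain ⟨d, -, rfl⟩ := hx
  exact (T.w_pos _ _ d.adj).le

lemma wsum_pos {a b : T.V} (p : T.G.Walk a b) (hab : a ≠ b) : 0 < T.wsum p := by
  apply List.sum_pos
  · rintro x hx
    rw [List.mem_map] at hx
    obtain ⟨d, -, rfl⟩ := hx
    exact T.w_pos _ _ d.adj
  · intro hc
    rw [List.map_eq_nil_iff] at hc
    apply hab
    apply SimpleGraph.Walk.eq_of_length_eq_zero (p := p)
    rw [← SimpleGraph.Walk.length_darts, hc, List.length_nil]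

lemma depth_le_of_mem_rootPath {z x : T.V} (hz : z ∈ (T.rootPath x).support) :
    T.depth z ≤ T.depth x := by
  have hTake : (T.rootPath x).takeUntil z hz = T.rootPath z :=
    T.eq_rootPath ((T.rootPath_isPath x).takeUntil hz)
  have := SimpleGraph.Walk.take_spec (T.rootPath x) hz
  rw [depth_eq_wsum, depth_eq_wsum, ← this, wsum_append, hTake]
  have := T.wsum_nonneg ((T.rootPath x).dropUntil z hz)
  linarith

lemma depth_lt_of_mem_rootPath {z x : T.V} (hz : z ∈ (T.rootPath x).support) (hne : z ≠ x) :
    T.depth z < T.depth x := by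
  have hTake : (T.rootPath x).takeUntil z hz = T.rootPath z :=
    T.eq_rootPath ((T.rootPath_isPath x).takeUntil hz)
  have := SimpleGraph.Walk.take_spec (T.rootPath x) hz
  rw [depth_eq_wsum, depth_eq_wsum, ← this, wsum_append, hTake]
  have := T.wsum_pos ((T.rootPath x).dropUntil z hz) hne
  linarith

lemma anc_step {m x y : T.V} (hadj : T.G.Adj x y) (hm : m ∈ (T.rootPath y).support)
    (hd : T.depth m ≤ T.depth x) : m ∈ (T.rootPath x).support := by
  by_cases hx : x ∈ (T.rootPath y).support
  · have hTake : (T.rootPath y).takeUntil x hx = T.rootPath x :=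
      T.eq_rootPath ((T.rootPath_isPath y).takeUntil hx)
    have hDrop : (T.rootPath y).dropUntil x hx = SimpleGraph.Walk.cons hadj SimpleGraph.Walk.nil := by
      apply T.path_unique ((T.rootPath_isPath y).dropUntil hx)
      simp [SimpleGraph.Walk.cons_isPath_iff, hadj.ne]
    have hspec := SimpleGraph.Walk.take_spec (T.rootPath y) hx
    have hm' := hm
    rw [← hspec, SimpleGraph.Walk.mem_support_append_iff, hTake, hDrop] at hm'
    rcases hm' with hm' | hm'
    · exact hm'
    · simp only [SimpleGraph.Walk.support_cons, SimpleGraph.Walk.support_nil,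
        List.mem_cons, List.mem_singleton] at hm'
      rcases hm' with rfl | hm'
      · exact SimpleGraph.Walk.end_mem_support _
      · rcases hm' with rfl | hm'
        · -- m = y : contradiction since depth y > depth x
          exfalso
          have hdy : T.depth m = T.depth x + T.w x m := by
            rw [depth_eq_wsum, ← hspec, wsum_append, hTake, hDrop, depth_eq_wsum]
            simp [wsum]
          have hw := T.w_pos x m hadj
          linarith
        · simp at hm'
  · -- x not on the path to y : extend the path to y by the edge y-x
    have hpath : ((T.rootPath y).concat hadj.symm).reverse.IsPath := by
      rw [SimpleGraph.Walk.reverse_concat]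
      exact ((T.rootPath_isPath y).reverse).cons
        (by rwa [SimpleGraph.Walk.support_reverse, List.mem_reverse])
    have hpath' : ((T.rootPath y).concat hadj.symm).IsPath := by
      have := hpath.reverse
      rwa [SimpleGraph.Walk.reverse_reverse] at this
    rw [← T.eq_rootPath hpath', SimpleGraph.Walk.support_concat]
    exact List.mem_append_left _ hm

lemma anc_along_walk {m a b : T.V} (W : T.G.Walk a b)
    (hmin : ∀ z ∈ W.support, T.depth m ≤ T.depth z)
    (ha : m ∈ (T.rootPath a).support) : m ∈ (T.rootPath b).support := by
  induction W with
  | nil => exact ha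
  | @cons u x b hadj p ih =>
    apply ih
    · intro z hz
      exact hmin z (by rw [SimpleGraph.Walk.support_cons]; exact List.mem_cons_of_mem _ hz)
    · refine T.anc_step hadj.symm ha (hmin x ?_)
      rw [SimpleGraph.Walk.support_cons]
      exact List.mem_cons_of_mem _ (SimpleGraph.Walk.start_mem_support _)

lemma exists_walk_in {S : Set T.V} (hS : (T.G.induce S).Connected) {a b : T.V}
    (ha : a ∈ S) (hb : b ∈ S) : ∃ W : T.G.Walk a b, ∀ z ∈ W.support, z ∈ S := by
  obtain ⟨W⟩ := hS ⟨a, ha⟩ ⟨b, hb⟩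
  refine ⟨W.map (SimpleGraph.Embedding.induce S).toHom, ?_⟩
  intro z hz
  replace hz : z ∈ (W.map (SimpleGraph.Embedding.induce S).toHom).support := hz
  rw [SimpleGraph.Walk.support_map, List.mem_map] at hz
  obtain ⟨⟨z', hz'⟩, -, rfl⟩ := hz
  exact hz'

lemma path_support_subset {S : Set T.V} (hS : (T.G.induce S).Connected) {a b : T.V}
    (ha : a ∈ S) (hb : b ∈ S) {P : T.G.Walk a b} (hP : P.IsPath) :
    ∀ z ∈ P.support, z ∈ S := by
  obtain ⟨W, hW⟩ := T.exists_walk_in hS ha hb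
  have hPb : P = W.bypass := T.path_unique hP W.bypass_isPath
  intro z hz
  exact hW z (W.support_bypass_subset (hPb ▸ hz))

lemma root_anc {S : Set T.V} (hS : (T.G.induce S).Connected) {m x : T.V} (hm : m ∈ S)
    (hmin : ∀ y ∈ S, T.depth m ≤ T.depth y) (hx : x ∈ S) :
    m ∈ (T.rootPath x).support := by
  obtain ⟨W, hW⟩ := T.exists_walk_in hS hm hx
  exact T.anc_along_walk W (fun z hz => hmin z (hW z hz)) (SimpleGraph.Walk.end_mem_support _)

lemma mem_dropUntil {a b x : T.V} (ha : a ∈ (T.rootPath x).support)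
    (hb : b ∈ (T.rootPath x).support) (hd : T.depth a ≤ T.depth b) :
    b ∈ ((T.rootPath x).dropUntil a ha).support := by
  have hspec := SimpleGraph.Walk.take_spec (T.rootPath x) ha
  have hb' := hb
  rw [← hspec, SimpleGraph.Walk.mem_support_append_iff] at hb'
  rcases hb' with hb' | hb'
  · have hTake : (T.rootPath x).takeUntil a ha = T.rootPath a :=
      T.eq_rootPath ((T.rootPath_isPath x).takeUntil ha)
    rw [hTake] at hb'
    rcases eq_or_ne b a with rfl | hne
    · exact SimpleGraph.Walk.start_mem_support _
    · exact absurd (T.depth_lt_of_mem_rootPath hb' hne) (not_lt.2 hd)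
  · exact hb'

end HostTree

/-- In a tree representation, if `v` maximizes the depth of its subtree root,
`u₁, u₂ ∈ N[v]`, and `T(u₂)` overshadows `T(u₁)`, then `N[u₁] ⊆ N[u₂]`. -/
theorem deepest_root_nbhd_subset {α : Type} [Fintype α] (G : SimpleGraph α)
    (T : HostTree) (t : α → Set T.V) (h : IsTreeRep G T t)
    (rt : α → T.V) (hrt : ∀ u : α, T.IsSubtreeRoot (t u) (rt u))
    (v : α) (hmax : ∀ u : α, T.depth (rt u) ≤ T.depth (rt v))
    (u₁ u₂ : α) (h1 : u₁ ∈ closedNbhd G v) (h2 : u₂ ∈ closedNbhd G v)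
    (hov : T.Overshadows (t u₂) (t u₁)) :
    closedNbhd G u₁ ⊆ closedNbhd G u₂ := by
  classical
  -- Part 1: the root of `t v` belongs to the subtree of every vertex of `N[v]`.
  have P1 : ∀ u : α, u ∈ closedNbhd G v → rt v ∈ t u := by
    intro u hu
    rcases Set.mem_insert_iff.1 hu with rfl | hadj
    · exact (hrt u).1
    · have hadj' : G.Adj v u := (SimpleGraph.mem_neighborSet _ _ _).mp hadj
      obtain ⟨q, hqv, hqu⟩ := (h.2 v u hadj'.ne).1 hadj'
      have hconn_u := (h.1 u).2
      have hconn_v := (h.1 v).2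
      have hAv : rt v ∈ (T.rootPath q).support :=
        T.root_anc hconn_v (hrt v).1 (hrt v).2 hqv
      have hAu : rt u ∈ (T.rootPath q).support :=
        T.root_anc hconn_u (hrt u).1 (hrt u).2 hqu
      have hseg : rt v ∈ ((T.rootPath q).dropUntil (rt u) hAu).support :=
        T.mem_dropUntil hAu hAv (hmax u)
      exact T.path_support_subset hconn_u (hrt u).1 hqu
        ((T.rootPath_isPath q).dropUntil hAu) _ hseg
  intro w hw
  rcases eq_or_ne w u₂ with rfl | hw2
  · exact Set.mem_insert _ _
  · suffices hne : (t w ∩ t u₂).Nonempty by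
      have hadj2 : G.Adj w u₂ := (h.2 w u₂ hw2).2 hne
      exact Set.mem_insert_of_mem _ (((SimpleGraph.mem_neighborSet _ _ _).mpr hadj2.symm))
    rcases eq_or_ne w u₁ with rfl | hw1
    · exact ⟨rt v, P1 w h1, P1 u₂ h2⟩
    · have hadj1 : G.Adj u₁ w := by
        rcases Set.mem_insert_iff.1 hw with rfl | hadj
        · exact absurd rfl hw1
        · exact (SimpleGraph.mem_neighborSet _ _ _).mp hadj
      obtain ⟨p, hpu1, hpw⟩ := (h.2 u₁ w (Ne.symm hw1)).1 hadj1
      by_cases hp2 : p ∈ t u₂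
      · exact ⟨p, hpw, hp2⟩
      · have hrv1 : rt v ∈ t u₁ := P1 u₁ h1
        have hrv2 : rt v ∈ t u₂ := P1 u₂ h2
        have hconn_w := (h.1 w).2
        have hconn_1 := (h.1 u₁).2
        have hAw : rt w ∈ (T.rootPath p).support :=
          T.root_anc hconn_w (hrt w).1 (hrt w).2 hpw
        obtain ⟨W, hWsub⟩ := T.exists_walk_in hconn_1 hrv1 hpu1
        obtain ⟨z, hzW, hzmin⟩ := W.support.toFinset.exists_min_image T.depth
          ⟨rt v, List.mem_toFinset.mpr (SimpleGraph.Walk.start_mem_support _)⟩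
        rw [List.mem_toFinset] at hzW
        have hzmin' : ∀ y ∈ W.support, T.depth z ≤ T.depth y := fun y hy =>
          hzmin y (List.mem_toFinset.mpr hy)
        have hz1 : z ∈ t u₁ := hWsub z hzW
        have hz2 : z ∈ t u₂ := by
          by_contra hcon
          have hlt := hov z ⟨hz1, hcon⟩ (rt v) ⟨hrv1, hrv2⟩
          exact absurd (hzmin' (rt v) (SimpleGraph.Walk.start_mem_support _)) (not_le.2 hlt)
        have hAz : z ∈ (T.rootPath p).support := by
          refine T.anc_along_walk (W.dropUntil z hzW) ?_ (SimpleGraph.Walk.end_mem_support _)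
          exact fun y hy => hzmin' y (W.support_dropUntil_subset hzW hy)
        rcases le_total (T.depth (rt w)) (T.depth z) with hle | hle
        · have hseg := T.mem_dropUntil hAw hAz hle
          have hzw : z ∈ t w := T.path_support_subset hconn_w (hrt w).1 hpw
            ((T.rootPath_isPath p).dropUntil hAw) _ hseg
          exact ⟨z, hzw, hz2⟩
        · have hseg := T.mem_dropUntil hAz hAw hle
          have hrw1 : rt w ∈ t u₁ := T.path_support_subset hconn_1 hz1 hpu1
            ((T.rootPath_isPath p).dropUntil hAz) _ hseg
          have hrw2 : rt w ∈ t u₂ := by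
            by_contra hcon
            have hlt := hov (rt w) ⟨hrw1, hcon⟩ (rt v) ⟨hrv1, hrv2⟩
            exact absurd (hmax w) (not_le.2 hlt)
          exact ⟨rt w, (hrt w).1, hrw2⟩
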